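/- Let G be a finite simple graph on vertex set V, let Z ⊆ V, and let M be a matching whose edges have both endpoints in Z (the edges of M need not be edges of G). Suppose H is a Hamilton cycle of the graph G[Z] ∪ M (on vertex set Z) that contains every edge of M, and suppose that for every edge e = xy ∈ M there is a path P_e in G from x to y all of whose internal vertices lie in V ∖ Z, such that the internal vertex sets of the paths {P_e : e ∈ M} are pairwise disjoint and their union equals V ∖ Z. Then G has a Hamilton cycle; indeed, the graph with edge set (E(H) ∖ M) ∪ ⋃_{e ∈ M} E(P_e) is a Hamilton cycle of G on V. -/

import Mathlib

open SimpleGraph Walk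

private lemma my_mem_support_tail {V : Type*} {G : SimpleGraph V} {u v : V}
    {p : G.Walk u u} (hp : p ≠ Walk.nil) (hv : v ∈ p.support) : v ∈ p.support.tail := by
  cases p with
  | nil => exact absurd rfl hp
  | cons h q =>
    rw [Walk.support_cons, List.mem_cons] at hv
    rw [Walk.support_cons, List.tail_cons]
    rcases hv with rfl | hv
    · exact q.end_mem_support
    · exact hv

private lemma my_isCycle_reverse {V : Type*} {G : SimpleGraph V} {u : V} {p : G.Walk u u}
    (hp : p.IsCycle) : p.reverse.IsCycle := by
  cases p with
  | nil => exact absurd rfl hp.ne_nil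
  | cons h q =>
    obtain ⟨hq, -⟩ := (Walk.cons_isCycle_iff q h).mp hp
    rw [Walk.isCycle_def]
    refine ⟨Walk.IsTrail.reverse _ hp.isCircuit.isTrail, ?_, ?_⟩
    · intro hcontra
      have := congrArg Walk.reverse hcontra
      rw [Walk.reverse_reverse, Walk.reverse_nil] at this
      exact hp.ne_nil this
    · rw [Walk.reverse_cons, Walk.tail_support_append]
      have h1 : q.reverse.support = u :: q.reverse.support.tail := q.reverse.support_eq_cons
      have h2 : q.reverse.support.Nodup := by
        rw [Walk.support_reverse, List.nodup_reverse]; exact hq.support_nodup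
      have h3 : u ∉ q.reverse.support.tail := by
        rw [h1, List.nodup_cons] at h2; exact h2.1
      have h4 : q.reverse.support.tail.Nodup := by
        rw [h1, List.nodup_cons] at h2; exact h2.2
      simp only [Walk.support_cons, Walk.support_nil, List.tail_cons]
      rw [List.nodup_append]
      exact ⟨h4, List.nodup_singleton u, by intro a ha b hb; rw [List.mem_singleton] at hb; subst hb; exact fun h => h3 (h ▸ ha)⟩

private lemma my_path_snd_of_edge {V : Type*} {G : SimpleGraph V} {v u w : V}
    {p : G.Walk v u} (hp : p.IsPath) (he : s(v, w) ∈ p.edges) :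
    ∃ (h : G.Adj v w) (q : G.Walk w u), p = Walk.cons h q := by
  have hadj : G.Adj v w := p.adj_of_mem_edges he
  cases p with
  | nil => simp at he
  | cons h' q =>
    rw [Walk.edges_cons, List.mem_cons] at he
    rcases he with he | he
    · rw [Sym2.eq_iff] at he
      rcases he with ⟨-, rfl⟩ | ⟨h1, h2⟩
      · exact ⟨h', q, rfl⟩
      · exact absurd h2.symm hadj.ne
    · exfalso
      have hv : v ∈ q.support := q.fst_mem_support_of_mem_edges he
      have := hp.support_nodup
      rw [Walk.support_cons, List.nodup_cons] at this
      exact this.1 hv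

private lemma my_cycle_decomp {V : Type*} {G : SimpleGraph V} {x₀ y₀ : V}
    {C : G.Walk x₀ x₀} (hC : C.IsCycle) (he : s(x₀, y₀) ∈ C.edges) :
    ∃ (h : G.Adj x₀ y₀) (q : G.Walk y₀ x₀),
      C = Walk.cons h q ∨ C.reverse = Walk.cons h q := by
  have hadj : G.Adj x₀ y₀ := C.adj_of_mem_edges he
  cases C with
  | nil => simp at he
  | cons h' q =>
    obtain ⟨hqpath, -⟩ := (Walk.cons_isCycle_iff q h').mp hC
    rw [Walk.edges_cons, List.mem_cons] at he
    rcases he with he | he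
    · rw [Sym2.eq_iff] at he
      rcases he with ⟨-, rfl⟩ | ⟨h1, h2⟩
      · exact ⟨h', q, Or.inl rfl⟩
      · exact absurd h2.symm hadj.ne
    · have he' : s(x₀, y₀) ∈ q.reverse.edges := by
        rw [Walk.edges_reverse, List.mem_reverse]; exact he
      obtain ⟨h2, r, hr⟩ := my_path_snd_of_edge hqpath.reverse he'
      refine ⟨h2, r.append (Walk.cons h'.symm Walk.nil), Or.inr ?_⟩
      rw [Walk.reverse_cons, hr, Walk.cons_append]

private lemma my_isCycle_transfer {V : Type*} {G G' : SimpleGraph V} {u : V} {p : G.Walk u u}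
    (hp : p.IsCycle) (h : ∀ e ∈ p.edges, e ∈ G'.edgeSet) : (p.transfer G' h).IsCycle := by
  rw [Walk.isCycle_def] at hp ⊢
  refine ⟨?_, ?_, ?_⟩
  · rw [Walk.isTrail_def, Walk.edges_transfer]
    exact hp.1.edges_nodup
  · intro hc
    have := congrArg Walk.length hc
    rw [Walk.length_transfer, Walk.length_nil] at this
    exact hp.2.1 (Walk.nil_iff_eq_nil.mp (Walk.length_eq_zero_iff.mp this))
  · rw [Walk.support_transfer]
    exact hp.2.2

private lemma my_absorb_aux {V : Type*} [DecidableEq V] (G : SimpleGraph V)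
    (x y : Sym2 V → V) (P : ∀ e : Sym2 V, G.Walk (x e) (y e)) :
    ∀ (n : ℕ) (M : Finset (Sym2 V)), M.card ≤ n →
      ∀ (a : V) (H : (G ⊔ SimpleGraph.fromEdgeSet ↑M).Walk a a),
      H.IsCycle →
      (∀ e ∈ M, e ∈ H.edges) →
      (∀ e ∈ M, e = s(x e, y e)) →
      (∀ e ∈ M, (P e).IsPath) →
      (∀ e ∈ M, ∀ v ∈ (P e).support, v ≠ x e → v ≠ y e → v ∉ H.support) →
      (∀ e ∈ M, ∀ f ∈ M, e ≠ f → ∀ v : V,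
        (v ∈ (P e).support ∧ v ≠ x e ∧ v ≠ y e) →
        ¬ (v ∈ (P f).support ∧ v ≠ x f ∧ v ≠ y f)) →
      (∀ e ∈ M, ∀ f ∈ M, e ∈ (P f).edges → e = f) →
      ∃ (b : V) (C : G.Walk b b), C.IsCycle ∧
        (∀ v : V, v ∈ C.support ↔ (v ∈ H.support ∨ ∃ e ∈ M, v ∈ (P e).support)) ∧
        (∀ e : Sym2 V, e ∈ C.edges ↔
          ((e ∈ H.edges ∧ e ∉ M) ∨ ∃ f ∈ M, e ∈ (P f).edges)) := by
  intro n
  induction n with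
  | zero =>
    intro M hMcard a H hH hHM hxy hPpath hPint hPdisj hPM
    have hM0 : M = ∅ := Finset.card_eq_zero.mp (Nat.le_zero.mp hMcard)
    subst hM0
    have hEdges : ∀ e ∈ H.edges, e ∈ G.edgeSet := by
      intro e he
      have h1 := H.edges_subset_edgeSet he
      rw [SimpleGraph.edgeSet_sup] at h1
      rcases h1 with h1 | h1
      · exact h1
      · simp at h1
    refine ⟨a, H.transfer G hEdges, my_isCycle_transfer hH hEdges, ?_, ?_⟩
    · intro v; rw [Walk.support_transfer]; simp
    · intro e; rw [Walk.edges_transfer]; simp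
  | succ n ih =>
    intro M hMcard a H hH hHM hxy hPpath hPint hPdisj hPM
    rcases M.eq_empty_or_nonempty with rfl | ⟨e₀, he₀⟩
    · exact ih ∅ (Nat.zero_le n) a H hH hHM hxy hPpath hPint hPdisj hPM
    have he₀H : e₀ ∈ H.edges := hHM e₀ he₀
    have he₀xy : e₀ = s(x e₀, y e₀) := hxy e₀ he₀
    set x₀ := x e₀ with hx₀
    set y₀ := y e₀ with hy₀
    have heH : s(x₀, y₀) ∈ H.edges := he₀xy ▸ he₀H
    have hadj₀ := H.adj_of_mem_edges heH
    have hxyne : x₀ ≠ y₀ := hadj₀.ne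
    have hx₀supp : x₀ ∈ H.support := H.fst_mem_support_of_mem_edges heH
    have hCcyc : (H.rotate x₀ hx₀supp).IsCycle := hH.rotate hx₀supp
    have hCsupp : ∀ v, v ∈ (H.rotate x₀ hx₀supp).support ↔ v ∈ H.support := by
      intro v
      constructor
      · intro hv
        exact List.mem_of_mem_tail
          ((H.support_rotate x₀ hx₀supp).mem_iff.mp (my_mem_support_tail hCcyc.ne_nil hv))
      · intro hv
        exact List.mem_of_mem_tail
          ((H.support_rotate x₀ hx₀supp).mem_iff.mpr (my_mem_support_tail hH.ne_nil hv))
    have hCedges : ∀ f, f ∈ (H.rotate x₀ hx₀supp).edges ↔ f ∈ H.edges :=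
      fun f => (H.rotate_edges x₀ hx₀supp).mem_iff
    obtain ⟨hadj, q, hq⟩ := my_cycle_decomp hCcyc ((hCedges _).mpr heH)
    have hDcyc : (Walk.cons hadj q).IsCycle := by
      rcases hq with h | h
      · exact h ▸ hCcyc
      · exact h ▸ my_isCycle_reverse hCcyc
    have hDsupp : ∀ v, v ∈ (Walk.cons hadj q).support ↔ v ∈ H.support := by
      intro v
      rcases hq with h | h
      · rw [← h]; exact hCsupp v
      · rw [← h, Walk.support_reverse, List.mem_reverse]; exact hCsupp v
    have hDedges : ∀ f, f ∈ (Walk.cons hadj q).edges ↔ f ∈ H.edges := by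
      intro f
      rcases hq with h | h
      · rw [← h]; exact hCedges f
      · rw [← h, Walk.edges_reverse, List.mem_reverse]; exact hCedges f
    obtain ⟨hqpath, hqe⟩ := (Walk.cons_isCycle_iff q hadj).mp hDcyc
    have hqsub : ∀ v ∈ q.support, v ∈ H.support := by
      intro v hv
      exact (hDsupp v).mp (by rw [Walk.support_cons]; exact List.mem_cons_of_mem _ hv)
    have hqedgesH : ∀ f ∈ q.edges, f ∈ H.edges := by
      intro f hf
      exact (hDedges f).mp (by rw [Walk.edges_cons]; exact List.mem_cons_of_mem _ hf)
    have hy₀supp : y₀ ∈ H.support := hqsub y₀ q.start_mem_support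
    set G' := G ⊔ SimpleGraph.fromEdgeSet ↑(M.erase e₀) with hG'
    have hqtrans : ∀ f ∈ q.edges, f ∈ G'.edgeSet := by
      intro f hf
      have h1 := q.edges_subset_edgeSet hf
      rw [hG', SimpleGraph.edgeSet_sup]
      rw [SimpleGraph.edgeSet_sup] at h1
      rcases h1 with h1 | h1
      · exact Or.inl h1
      · right
        rw [SimpleGraph.edgeSet_fromEdgeSet] at h1 ⊢
        refine ⟨?_, h1.2⟩
        have hfM : f ∈ M := h1.1
        have hfne : f ≠ e₀ := by
          intro hc
          apply hqe
          rw [← he₀xy, ← hc]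
          exact hf
        simp only [Finset.coe_erase, Set.mem_diff, Set.mem_singleton_iff]
        exact ⟨hfM, hfne⟩
    have hPtrans : ∀ f ∈ (P e₀).edges, f ∈ G'.edgeSet := by
      intro f hf
      rw [hG', SimpleGraph.edgeSet_sup]
      exact Or.inl ((P e₀).edges_subset_edgeSet hf)
    set q' : G'.Walk y₀ x₀ := q.transfer G' hqtrans with hq'
    set P' : G'.Walk x₀ y₀ := (P e₀).transfer G' hPtrans with hP'
    set H' : G'.Walk y₀ y₀ := q'.append P' with hH'def
    have hH'edges : ∀ f, f ∈ H'.edges ↔ (f ∈ q.edges ∨ f ∈ (P e₀).edges) := by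
      intro f
      rw [hH'def, Walk.edges_append, List.mem_append, hq', hP',
        Walk.edges_transfer, Walk.edges_transfer]
    have hH'supp : ∀ v, v ∈ H'.support ↔ (v ∈ q.support ∨ v ∈ (P e₀).support) := by
      intro v
      rw [hH'def, Walk.mem_support_append_iff, hq', hP',
        Walk.support_transfer, Walk.support_transfer]
    have hint₀ : ∀ v ∈ (P e₀).support, v ≠ x₀ → v ≠ y₀ → v ∉ H.support := hPint e₀ he₀
    have hqTrail : q.edges.Nodup := hqpath.isTrail.edges_nodup
    have hPnodup : (P e₀).edges.Nodup := (hPpath e₀ he₀).isTrail.edges_nodup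
    have hdisjE : ∀ f, f ∈ q.edges → f ∈ (P e₀).edges → False := by
      intro f hfq hfP
      induction f using Sym2.ind with
      | _ u v =>
        have huP : u ∈ (P e₀).support := (P e₀).fst_mem_support_of_mem_edges hfP
        have hvP : v ∈ (P e₀).support := (P e₀).snd_mem_support_of_mem_edges hfP
        have huq : u ∈ H.support := hqsub u (q.fst_mem_support_of_mem_edges hfq)
        have hvq : v ∈ H.support := hqsub v (q.snd_mem_support_of_mem_edges hfq)
        have huv : u ≠ v := ((P e₀).adj_of_mem_edges hfP).ne
        have hu : u = x₀ ∨ u = y₀ := by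
          by_contra hc
          push_neg at hc
          exact hint₀ u huP hc.1 hc.2 huq
        have hv : v = x₀ ∨ v = y₀ := by
          by_contra hc
          push_neg at hc
          exact hint₀ v hvP hc.1 hc.2 hvq
        apply hqe
        rcases hu with rfl | rfl <;> rcases hv with rfl | rfl
        · exact absurd rfl huv
        · exact hfq
        · rw [Sym2.eq_swap]; exact hfq
        · exact absurd rfl huv
    have hH'cyc : H'.IsCycle := by
      rw [Walk.isCycle_def]
      refine ⟨?_, ?_, ?_⟩
      · rw [Walk.isTrail_def, hH'def, Walk.edges_append, hq', hP',
          Walk.edges_transfer, Walk.edges_transfer, List.nodup_append]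
        exact ⟨hqTrail, hPnodup, fun f hf₁ g hg₂ hfg => hdisjE f hf₁ (hfg ▸ hg₂)⟩
      · intro hc
        have hlen := congrArg Walk.length hc
        rw [hH'def, Walk.length_append, hq', hP', Walk.length_transfer,
          Walk.length_transfer, Walk.length_nil] at hlen
        have hq0 : q.length = 0 := by omega
        exact hxyne (Walk.eq_of_length_eq_zero hq0).symm
      · rw [hH'def, Walk.tail_support_append, hq', hP',
          Walk.support_transfer, Walk.support_transfer, List.nodup_append]
        refine ⟨hqpath.support_nodup.tail, (hPpath e₀ he₀).support_nodup.tail, ?_⟩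
        intro v hv₁ w hv₂ hvw; subst hvw
        have hvq : v ∈ H.support := hqsub v (List.mem_of_mem_tail hv₁)
        have hvy : v ≠ y₀ := by
          intro hveq
          have hnd := hqpath.support_nodup
          rw [q.support_eq_cons, List.nodup_cons] at hnd
          rw [hveq] at hv₁
          exact hnd.1 hv₁
        have hvx : v ≠ x₀ := by
          intro hveq
          have hnd := (hPpath e₀ he₀).support_nodup
          rw [(P e₀).support_eq_cons, List.nodup_cons] at hnd
          rw [hveq] at hv₂
          exact hnd.1 hv₂
        exact hint₀ v (List.mem_of_mem_tail hv₂) hvx hvy hvq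
    have hcard : (M.erase e₀).card ≤ n := by
      have := Finset.card_erase_of_mem he₀
      omega
    have hHM' : ∀ f ∈ M.erase e₀, f ∈ H'.edges := by
      intro f hf
      obtain ⟨hfne, hfM⟩ := Finset.mem_erase.mp hf
      have hfH := (hDedges f).mpr (hHM f hfM)
      rw [Walk.edges_cons, List.mem_cons] at hfH
      rcases hfH with h | h
      · exact absurd (h.trans he₀xy.symm) hfne
      · exact (hH'edges f).mpr (Or.inl h)
    have hPint' : ∀ f ∈ M.erase e₀, ∀ v ∈ (P f).support,
        v ≠ x f → v ≠ y f → v ∉ H'.support := by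
      intro f hf v hv hvx hvy
      obtain ⟨hfne, hfM⟩ := Finset.mem_erase.mp hf
      have hvH : v ∉ H.support := hPint f hfM v hv hvx hvy
      rw [hH'supp]
      push_neg
      constructor
      · intro hc; exact hvH (hqsub v hc)
      · intro hc
        have hvx₀ : v ≠ x₀ := fun h => hvH (by rw [h]; exact hx₀supp)
        have hvy₀ : v ≠ y₀ := fun h => hvH (by rw [h]; exact hy₀supp)
        exact hPdisj f hfM e₀ he₀ hfne v ⟨hv, hvx, hvy⟩ ⟨hc, hvx₀, hvy₀⟩
    obtain ⟨b, Cb, hCbcyc, hCbsupp, hCbedges⟩ :=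
      ih (M.erase e₀) hcard y₀ H' hH'cyc hHM'
        (fun f hf => hxy f (Finset.mem_erase.mp hf).2)
        (fun f hf => hPpath f (Finset.mem_erase.mp hf).2)
        hPint'
        (fun f hf g hg => hPdisj f (Finset.mem_erase.mp hf).2 g (Finset.mem_erase.mp hg).2)
        (fun f hf g hg => hPM f (Finset.mem_erase.mp hf).2 g (Finset.mem_erase.mp hg).2)
    refine ⟨b, Cb, hCbcyc, ?_, ?_⟩
    · intro v
      rw [hCbsupp v]
      constructor
      · rintro (hv | ⟨f, hf, hv⟩)
        · rw [hH'supp] at hv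
          rcases hv with hv | hv
          · exact Or.inl (hqsub v hv)
          · exact Or.inr ⟨e₀, he₀, hv⟩
        · exact Or.inr ⟨f, (Finset.mem_erase.mp hf).2, hv⟩
      · rintro (hv | ⟨f, hf, hv⟩)
        · left
          rw [hH'supp]
          left
          have hD := (hDsupp v).mpr hv
          rw [Walk.support_cons, List.mem_cons] at hD
          rcases hD with rfl | h
          · exact q.end_mem_support
          · exact h
        · by_cases hfe : f = e₀
          · left
            rw [hH'supp]
            right
            rw [hfe] at hv
            exact hv
          · exact Or.inr ⟨f, Finset.mem_erase.mpr ⟨hfe, hf⟩, hv⟩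
    · intro e
      rw [hCbedges e]
      constructor
      · rintro (⟨he, heM⟩ | ⟨f, hf, he⟩)
        · rw [hH'edges] at he
          rcases he with he | he
          · left
            refine ⟨hqedgesH e he, ?_⟩
            intro heM'
            have hee : e = e₀ := by
              by_contra hne
              exact heM (Finset.mem_erase.mpr ⟨hne, heM'⟩)
            apply hqe
            rw [← he₀xy, ← hee]
            exact he
          · exact Or.inr ⟨e₀, he₀, he⟩
        · exact Or.inr ⟨f, (Finset.mem_erase.mp hf).2, he⟩
      · rintro (⟨heH, heM⟩ | ⟨f, hf, he⟩)
        · have hne : e ≠ e₀ := fun h => heM (h ▸ he₀)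
          left
          constructor
          · rw [hH'edges]
            left
            have hD := (hDedges e).mpr heH
            rw [Walk.edges_cons, List.mem_cons] at hD
            rcases hD with h | h
            · exact absurd (h.trans he₀xy.symm) hne
            · exact h
          · intro hc
            exact heM (Finset.mem_erase.mp hc).2
        · by_cases hfe : f = e₀
          · left
            have he' : e ∈ (P e₀).edges := by rw [← hfe]; exact he
            refine ⟨(hH'edges e).mpr (Or.inr he'), ?_⟩
            intro hc
            exact (Finset.mem_erase.mp hc).1 (hPM e (Finset.mem_erase.mp hc).2 e₀ he₀ he')
          · exact Or.inr ⟨f, Finset.mem_erase.mpr ⟨hfe, hf⟩, he⟩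


/-- Let `G` be a finite simple graph on `V`, let `Z ⊆ V`, and let
`M` be a matching whose edges have both endpoints in `Z` (the edges of `M` need not be
edges of `G`).  Suppose `H` is a Hamilton cycle of `G[Z] ∪ M` (a cycle of `G ⊔ M`
whose support is exactly `Z`) containing every edge of `M`, and suppose that for every
edge `e = xy ∈ M` there is a path `P e` in `G` from `x e` to `y e` whose internal
vertices lie in `V \ Z`, the internal vertex sets being pairwise disjoint with union
`V \ Z`.  Then `G` has a Hamilton cycle; indeed one whose edge set is
`(E(H) \ M) ∪ ⋃_{e ∈ M} E(P e)`. -/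
theorem absorb_paths_into_hamilton_cycle {V : Type*} [Fintype V] [DecidableEq V]
    (G : SimpleGraph V) (Z : Set V) (M : Finset (Sym2 V))
    (hMdiag : ∀ e ∈ M, ¬ e.IsDiag)
    (hMZ : ∀ e ∈ M, ∀ v : V, v ∈ e → v ∈ Z)
    (hMdisj : ∀ e ∈ M, ∀ f ∈ M, e ≠ f → ∀ v : V, v ∈ e → v ∉ f)
    (a : V) (H : (G ⊔ SimpleGraph.fromEdgeSet ↑M).Walk a a)
    (hH : H.IsCycle) (hHsupp : ∀ x : V, x ∈ H.support ↔ x ∈ Z)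
    (hHM : ∀ e ∈ M, e ∈ H.edges)
    (x y : Sym2 V → V) (P : ∀ e : Sym2 V, G.Walk (x e) (y e))
    (hxy : ∀ e ∈ M, e = s(x e, y e))
    (hPpath : ∀ e ∈ M, (P e).IsPath)
    (hPint : ∀ e ∈ M, ∀ v ∈ (P e).support, v ≠ x e → v ≠ y e → v ∉ Z)
    (hPdisj : ∀ e ∈ M, ∀ f ∈ M, e ≠ f → ∀ v : V,
      (v ∈ (P e).support ∧ v ≠ x e ∧ v ≠ y e) →
      ¬ (v ∈ (P f).support ∧ v ≠ x f ∧ v ≠ y f))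
    (hPcover : ∀ v : V, v ∉ Z → ∃ e ∈ M, v ∈ (P e).support ∧ v ≠ x e ∧ v ≠ y e) :
    ∃ (b : V) (C : G.Walk b b), C.IsHamiltonianCycle ∧
      (∀ e : Sym2 V, e ∈ C.edges ↔
        ((e ∈ H.edges ∧ e ∉ M) ∨ ∃ f ∈ M, e ∈ (P f).edges)) := by
  have hPM : ∀ e ∈ M, ∀ f ∈ M, e ∈ (P f).edges → e = f := by
    intro e he f hf hef
    induction e using Sym2.ind with
    | _ u v =>
      have huZ : u ∈ Z := hMZ _ he u (Sym2.mem_mk_left u v)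
      have hvZ : v ∈ Z := hMZ _ he v (Sym2.mem_mk_right u v)
      have huP : u ∈ (P f).support := (P f).fst_mem_support_of_mem_edges hef
      have hvP : v ∈ (P f).support := (P f).snd_mem_support_of_mem_edges hef
      have huv : u ≠ v := ((P f).adj_of_mem_edges hef).ne
      have hu : u = x f ∨ u = y f := by
        by_contra hc; push_neg at hc
        exact hPint f hf u huP hc.1 hc.2 huZ
      have hv : v = x f ∨ v = y f := by
        by_contra hc; push_neg at hc
        exact hPint f hf v hvP hc.1 hc.2 hvZ
      rw [hxy f hf]
      rcases hu with rfl | rfl <;> rcases hv with rfl | rfl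
      · exact absurd rfl huv
      · rfl
      · exact Sym2.eq_swap
      · exact absurd rfl huv
  have hPintH : ∀ e ∈ M, ∀ v ∈ (P e).support, v ≠ x e → v ≠ y e → v ∉ H.support := by
    intro e he v hv h1 h2 hc
    exact hPint e he v hv h1 h2 ((hHsupp v).mp hc)
  obtain ⟨b, C, hcyc, hsupp, hedges⟩ :=
    my_absorb_aux G x y P M.card M le_rfl a H hH hHM hxy hPpath hPintH hPdisj hPM
  refine ⟨b, C, ?_, hedges⟩
  rw [Walk.isHamiltonianCycle_isCycle_and_isHamiltonian_tail]
  refine ⟨hcyc, ?_⟩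
  have htp : C.tail.IsPath := by
    apply Walk.IsPath.mk'
    rw [Walk.support_tail_of_not_nil C hcyc.not_nil]
    exact hcyc.support_nodup
  apply htp.isHamiltonian_of_mem
  intro w
  rw [Walk.support_tail_of_not_nil C hcyc.not_nil]
  apply my_mem_support_tail hcyc.ne_nil
  rw [hsupp w]
  by_cases hw : w ∈ Z
  · exact Or.inl ((hHsupp w).mpr hw)
  · obtain ⟨e, he, hsup, -, -⟩ := hPcover w hw
    exact Or.inr ⟨e, he, hsup⟩
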